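/- In the ring of formal power series ℚ[[q]], the identity ∑_{n=1}^∞ q^{n²} · (q^{n+1};q)_∞ · ((q;q)_{n−1})^{−1} · (1+q^n)^{−1} = ∑_{n=1}^∞ (−1)^{n−1} q^{n(n+1)/2} · (∏_{j=1}^{n} (1+q^j))^{−1} holds. -/

import Mathlib

open PowerSeries

/-- The coefficientwise sum of a family of formal power series; it agrees with
the sum of the family whenever `coeff N (f n) = 0` for `n > N` (so that the
partial sums converge coefficientwise in the `q`-adic topology). -/
noncomputable def seriesSum {R : Type*} [CommRing R] (f : ℕ → PowerSeries R) : PowerSeries R :=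
  PowerSeries.mk fun N => ∑ n ∈ Finset.range (N + 1), PowerSeries.coeff (R := R) N (f n)

/-- The coefficientwise infinite product of a family of formal power series;
it agrees with the product of the family whenever each factor `f k` is
`1 + (terms of order > k)` (so that the partial products converge
coefficientwise in the `q`-adic topology). -/
noncomputable def seriesProd {R : Type*} [CommRing R] (f : ℕ → PowerSeries R) : PowerSeries R :=
  PowerSeries.mk fun N => PowerSeries.coeff (R := R) N (∏ k ∈ Finset.range (N + 1), f k)

namespace Stmt1Aux
open Finset

/-- order condition: term `m` has vanishing coefficients below `m`. -/
def Ord (f : ℕ → PowerSeries ℚ) : Prop := ∀ m N, N < m → coeff (R := ℚ) N (f m) = 0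

lemma coeff_seriesSum (f : ℕ → PowerSeries ℚ) (N : ℕ) :
    coeff (R := ℚ) N (seriesSum f) = ∑ n ∈ range (N + 1), coeff (R := ℚ) N (f n) := by
  simp [seriesSum]

lemma coeff_seriesProd (f : ℕ → PowerSeries ℚ) (N : ℕ) :
    coeff (R := ℚ) N (seriesProd f) = coeff (R := ℚ) N (∏ k ∈ range (N + 1), f k) := by
  simp [seriesProd]

lemma coeff_seriesSum_eq (f : ℕ → PowerSeries ℚ) (hf : Ord f) {N M : ℕ} (hM : N < M) :
    coeff (R := ℚ) N (seriesSum f) = ∑ m ∈ range M, coeff (R := ℚ) N (f m) := by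
  rw [coeff_seriesSum]
  refine Finset.sum_subset (Finset.range_subset_range.mpr (by omega)) fun m hm hnm => ?_
  simp only [Finset.mem_range] at hm hnm
  exact hf m N (by omega)

lemma seriesSum_sub (f g : ℕ → PowerSeries ℚ) :
    seriesSum (fun m => f m - g m) = seriesSum f - seriesSum g := by
  ext N
  simp [coeff_seriesSum, Finset.sum_sub_distrib]

lemma seriesSum_neg (f : ℕ → PowerSeries ℚ) :
    seriesSum (fun m => -(f m)) = -seriesSum f := by
  ext N
  simp [coeff_seriesSum]

lemma seriesSum_mul_left (g : PowerSeries ℚ) (f : ℕ → PowerSeries ℚ) (hf : Ord f) :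
    seriesSum (fun m => g * f m) = g * seriesSum f := by
  ext N
  rw [coeff_seriesSum, coeff_mul]
  simp_rw [coeff_mul]
  rw [Finset.sum_comm]
  refine Finset.sum_congr rfl fun p hp => ?_
  rw [← Finset.mul_sum]
  congr 1
  have hp2 : p.2 ≤ N := by
    have := Finset.HasAntidiagonal.mem_antidiagonal.mp hp; omega
  rw [coeff_seriesSum_eq f hf (show p.2 < N + 1 by omega)]

lemma seriesSum_shift (f : ℕ → PowerSeries ℚ) (hf : Ord f) :
    seriesSum f = f 0 + seriesSum (fun m => f (m + 1)) := by
  ext N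
  rw [map_add, coeff_seriesSum, coeff_seriesSum, Finset.sum_range_succ', Finset.sum_range_succ,
    hf (N + 1) N (by omega)]
  ring

lemma seriesSum_telescope (g : ℕ → PowerSeries ℚ) (hg : Ord g) :
    seriesSum (fun m => g m - g (m + 1)) = g 0 := by
  rw [seriesSum_sub, seriesSum_shift g hg]
  ring

lemma coeff_X_pow_mul_eq_zero {a N : ℕ} (g : PowerSeries ℚ) (h : N < a) :
    coeff (R := ℚ) N (X ^ a * g) = 0 := by
  rw [coeff_X_pow_mul', if_neg (by omega)]

lemma coeff_mul_congr {N : ℕ} (g A B : PowerSeries ℚ)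
    (h : ∀ j, j ≤ N → coeff (R := ℚ) j A = coeff (R := ℚ) j B) :
    coeff (R := ℚ) N (g * A) = coeff (R := ℚ) N (g * B) := by
  rw [coeff_mul, coeff_mul]
  refine Finset.sum_congr rfl fun p hp => ?_
  rw [h p.2 (by have := Finset.HasAntidiagonal.mem_antidiagonal.mp hp; omega)]

open Finset

noncomputable def Pi' (a : ℕ) : PowerSeries ℚ := seriesProd fun i => 1 - X ^ (a + i)

lemma coeff_mul_one_sub_X_pow (P : PowerSeries ℚ) {N b : ℕ} (hb : N < b) :
    coeff (R := ℚ) N (P * (1 - X ^ b)) = coeff (R := ℚ) N P := by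
  rw [mul_sub, mul_one, map_sub, coeff_mul_X_pow', if_neg (by omega), sub_zero]

lemma coeff_prod_stab (a N : ℕ) (ha : 0 < a) :
    ∀ M, N < M → coeff (R := ℚ) N (∏ i ∈ range M, (1 - X ^ (a + i) : PowerSeries ℚ))
      = coeff (R := ℚ) N (∏ i ∈ range (N + 1), (1 - X ^ (a + i) : PowerSeries ℚ)) := by
  intro M
  induction M with
  | zero => omega
  | succ M ihM =>
    intro hM
    rcases Nat.lt_or_ge N M with h | h
    · rw [prod_range_succ, coeff_mul_one_sub_X_pow _ (by omega), ihM h]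
    · have : M = N := by omega
      subst this
      rfl

lemma coeff_Pi' (a N : ℕ) :
    coeff (R := ℚ) N (Pi' a) = coeff (R := ℚ) N (∏ i ∈ range (N + 1), (1 - X ^ (a + i) : PowerSeries ℚ)) := by
  simp [Pi', seriesProd]

lemma coeff_Pi'_of_lt {a N : ℕ} (h : N < a) :
    coeff (R := ℚ) N (Pi' a) = coeff (R := ℚ) N (1 : PowerSeries ℚ) := by
  rw [coeff_Pi']
  have : ∀ M, coeff (R := ℚ) N (∏ i ∈ range M, (1 - X ^ (a + i) : PowerSeries ℚ))
      = coeff (R := ℚ) N (1 : PowerSeries ℚ) := by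
    intro M
    induction M with
    | zero => rw [prod_range_zero]
    | succ M ihM => rw [prod_range_succ, coeff_mul_one_sub_X_pow _ (by omega), ihM]
  exact this (N + 1)

lemma Pi'_split (a : ℕ) (ha : 0 < a) : Pi' a = (1 - X ^ a) * Pi' (a + 1) := by
  ext N
  rw [coeff_Pi' a N]
  rw [coeff_mul_congr (1 - X ^ a) (Pi' (a + 1))
    (∏ i ∈ range (N + 1), (1 - X ^ (a + 1 + i) : PowerSeries ℚ))
    (fun j hj => by rw [coeff_Pi', coeff_prod_stab (a + 1) j (by omega) (N + 1) (by omega)])]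
  have hprod : (1 - X ^ a : PowerSeries ℚ) * ∏ i ∈ range (N + 1), (1 - X ^ (a + 1 + i))
      = ∏ i ∈ range (N + 2), (1 - X ^ (a + i)) := by
    rw [Finset.prod_range_succ' (fun i => (1 - X ^ (a + i) : PowerSeries ℚ)) (N + 1)]
    rw [add_zero]
    rw [mul_comm]
    congr 1
    refine Finset.prod_congr rfl fun i _ => ?_
    congr 2
    omega
  rw [hprod, coeff_prod_stab a N ha (N + 2) (by omega)]

-- units
lemma isUnit_one_sub_X_pow (a : ℕ) (ha : 0 < a) : IsUnit ((1 : PowerSeries ℚ) - X ^ a) := by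
  rw [PowerSeries.isUnit_iff_constantCoeff, map_sub, map_one, map_pow, constantCoeff_X,
    zero_pow (by omega : a ≠ 0), sub_zero]
  exact isUnit_one

lemma isUnit_one_add_X_pow (a : ℕ) (ha : 0 < a) : IsUnit ((1 : PowerSeries ℚ) + X ^ a) := by
  rw [PowerSeries.isUnit_iff_constantCoeff, map_add, map_one, map_pow, constantCoeff_X,
    zero_pow (by omega : a ≠ 0), add_zero]
  exact isUnit_one

lemma isUnit_Pn (m : ℕ) : IsUnit (∏ i ∈ range m, ((1 : PowerSeries ℚ) - X ^ (i + 1))) := by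
  rw [PowerSeries.isUnit_iff_constantCoeff, map_prod]
  have : ∀ i ∈ range m, constantCoeff (R := ℚ) ((1 : PowerSeries ℚ) - X ^ (i + 1)) = 1 := fun i _ => by
    rw [map_sub, map_one, map_pow, constantCoeff_X, zero_pow (by omega : i + 1 ≠ 0), sub_zero]
  rw [Finset.prod_congr rfl this, Finset.prod_const_one]
  exact isUnit_one

lemma isUnit_Qn (m : ℕ) : IsUnit (∏ j ∈ range m, ((1 : PowerSeries ℚ) + X ^ (j + 1))) := by
  rw [PowerSeries.isUnit_iff_constantCoeff, map_prod]
  have : ∀ j ∈ range m, constantCoeff (R := ℚ) ((1 : PowerSeries ℚ) + X ^ (j + 1)) = 1 := fun j _ => by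
    rw [map_add, map_one, map_pow, constantCoeff_X, zero_pow (by omega : j + 1 ≠ 0), add_zero]
  rw [Finset.prod_congr rfl this, Finset.prod_const_one]
  exact isUnit_one

noncomputable def iPn (m : ℕ) : PowerSeries ℚ :=
  Ring.inverse (∏ i ∈ range m, ((1 : PowerSeries ℚ) - X ^ (i + 1)))
noncomputable def iQn (m : ℕ) : PowerSeries ℚ :=
  Ring.inverse (∏ j ∈ range m, ((1 : PowerSeries ℚ) + X ^ (j + 1)))
noncomputable def i1p (a : ℕ) : PowerSeries ℚ := Ring.inverse ((1 : PowerSeries ℚ) + X ^ a)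

lemma i1p_cancel (a : ℕ) (ha : 0 < a) : ((1 : PowerSeries ℚ) + X ^ a) * i1p a = 1 :=
  Ring.mul_inverse_cancel _ (isUnit_one_add_X_pow a ha)

lemma iPn_zero : iPn 0 = 1 := by simp [iPn, Ring.inverse_one]

lemma iQn_zero : iQn 0 = 1 := by simp [iQn, Ring.inverse_one]

lemma iPn_succ (m : ℕ) : iPn m = (1 - X ^ (m + 1)) * iPn (m + 1) := by
  unfold iPn
  rw [Finset.prod_range_succ, Ring.mul_inverse_rev, ← mul_assoc,
    Ring.mul_inverse_cancel _ (isUnit_one_sub_X_pow (m + 1) (by omega)), one_mul]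

lemma iQn_succ (m : ℕ) : iQn m = (1 + X ^ (m + 1)) * iQn (m + 1) := by
  unfold iQn
  rw [Finset.prod_range_succ, Ring.mul_inverse_rev, ← mul_assoc,
    Ring.mul_inverse_cancel _ (isUnit_one_add_X_pow (m + 1) (by omega)), one_mul]


end Stmt1Aux

namespace Stmt1Aux
open Finset

noncomputable def Tn (m : ℕ) : ℕ := (m + 1) * (m + 2) / 2

lemma Tn_succ (m : ℕ) : Tn (m + 1) = Tn m + (m + 2) := by
  unfold Tn
  rw [show (m + 1 + 1) * (m + 1 + 2) = (m + 1) * (m + 2) + (m + 2) * 2 by ring,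
    Nat.add_mul_div_right _ _ (by norm_num : (0:ℕ) < 2)]

lemma Tn_ge (m : ℕ) : m + 1 ≤ Tn m := by
  induction m with
  | zero => simp [Tn]
  | succ m ih => rw [Tn_succ]; omega

noncomputable def zf (k m : ℕ) : PowerSeries ℚ :=
  X ^ ((m + 1) ^ 2 + k * (m + 1)) * (Pi' (m + k + 2) * (iPn m * i1p (m + 1)))

noncomputable def ef (j m : ℕ) : PowerSeries ℚ :=
  X ^ (m * (m + j)) * (Pi' (m + j + 1) * iPn m)

noncomputable def wf (k m : ℕ) : PowerSeries ℚ :=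
  (-1 : PowerSeries ℚ) ^ m * (X ^ (Tn m + k * (m + 1)) * iQn (m + 1))

noncomputable def uf (k m : ℕ) : PowerSeries ℚ :=
  (-1 : PowerSeries ℚ) ^ m * (X ^ (Tn m + k * (m + 1)) * iQn m)

noncomputable def dd (j m : ℕ) : PowerSeries ℚ :=
  X ^ ((m + 1) * (m + 1 + j)) * (Pi' (m + j + 2) * iPn m)

noncomputable def gg (j : ℕ) : ℕ → PowerSeries ℚ
  | 0 => 0
  | (i + 1) => dd j i

lemma neg_one_pow_coeff (m N : ℕ) (y : PowerSeries ℚ) :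
    coeff (R := ℚ) N ((-1 : PowerSeries ℚ) ^ m * y) = (-1 : ℚ) ^ m * coeff (R := ℚ) N y := by
  have h : ((-1 : PowerSeries ℚ)) = C (R := ℚ) (-1) := by simp
  rw [h, ← map_pow, coeff_C_mul]

lemma ord_zf (k : ℕ) : Ord (zf k) := fun m N h => by
  apply coeff_X_pow_mul_eq_zero
  have h1 : m + 1 ≤ (m + 1) ^ 2 := Nat.le_self_pow (by norm_num) _
  omega

lemma ord_ef (j : ℕ) : Ord (ef j) := fun m N h => by
  apply coeff_X_pow_mul_eq_zero
  have h1 : m * 1 ≤ m * (m + j) := Nat.mul_le_mul_left m (by omega)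
  omega

lemma ord_wf (k : ℕ) : Ord (wf k) := fun m N h => by
  unfold wf
  rw [neg_one_pow_coeff, coeff_X_pow_mul_eq_zero _ (by have := Tn_ge m; omega), mul_zero]

lemma ord_uf (k : ℕ) : Ord (uf k) := fun m N h => by
  unfold uf
  rw [neg_one_pow_coeff, coeff_X_pow_mul_eq_zero _ (by have := Tn_ge m; omega), mul_zero]

lemma ord_gg (j : ℕ) : Ord (gg j) := by
  intro m N h
  cases m with
  | zero => omega
  | succ i =>
    show coeff (R := ℚ) N (dd j i) = 0
    apply coeff_X_pow_mul_eq_zero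
    have h1 : (i + 1) * 1 ≤ (i + 1) * (i + 1 + j) := Nat.mul_le_mul_left _ (by omega)
    omega

lemma T1a (j : ℕ) : ef j 0 - ef (j + 1) 0 = gg j 0 - gg j (0 + 1) := by
  show ef j 0 - ef (j + 1) 0 = 0 - dd j 0
  unfold ef dd
  rw [show 0 + j + 1 = j + 1 by omega, show 0 + (j + 1) + 1 = j + 2 by omega,
    show 0 + j + 2 = j + 2 by omega]
  rw [Pi'_split (j + 1) (by omega), show j + 1 + 1 = j + 2 by omega, iPn_zero]
  ring

lemma T1b (j m : ℕ) :
    ef j (m + 1) - ef (j + 1) (m + 1) = gg j (m + 1) - gg j (m + 1 + 1) := by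
  show ef j (m + 1) - ef (j + 1) (m + 1) = dd j m - dd j (m + 1)
  unfold ef dd
  rw [show m + 1 + j + 1 = m + j + 2 by omega, show m + 1 + (j + 1) + 1 = m + j + 3 by omega,
    show m + 1 + j + 2 = m + j + 3 by omega]
  rw [Pi'_split (m + j + 2) (by omega), show m + j + 2 + 1 = m + j + 3 by omega]
  rw [iPn_succ m]
  ring

lemma T3 (k m : ℕ) :
    zf k m = X ^ (k + 1) * ef (k + 2) m - (X ^ (k + 1) + 1) * zf (k + 1) m := by
  unfold zf ef
  rw [show m + (k + 1) + 2 = m + k + 3 by omega, show m + (k + 2) + 1 = m + k + 3 by omega]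
  rw [Pi'_split (m + k + 2) (by omega), show m + k + 2 + 1 = m + k + 3 by omega]
  have key : X ^ (k + 1) * (X ^ (m * (m + (k + 2))) * (Pi' (m + k + 3) * iPn m))
      = X ^ (k + 1) * (X ^ (m * (m + (k + 2))) * (Pi' (m + k + 3) * iPn m))
        * (((1 : PowerSeries ℚ) + X ^ (m + 1)) * i1p (m + 1)) := by
    rw [i1p_cancel (m + 1) (by omega), mul_one]
  rw [key]
  ring

lemma T4a (k m : ℕ) : wf k m = uf k m - wf (k + 1) m := by
  unfold wf uf
  rw [iQn_succ m]
  ring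

lemma T4b (k m : ℕ) : uf k (m + 1) = -(X ^ (k + 1) * wf (k + 1) m) := by
  unfold uf wf
  rw [Tn_succ m, pow_succ]
  ring

lemma T4c (k : ℕ) : uf k 0 = X ^ (k + 1) := by
  unfold uf
  rw [iQn_zero]
  rw [show Tn 0 + k * (0 + 1) = k + 1 by simp [Tn]; omega]
  simp

lemma Ej_step (j : ℕ) : seriesSum (ef j) = seriesSum (ef (j + 1)) := by
  have h : seriesSum (ef j) - seriesSum (ef (j + 1)) = 0 := by
    rw [← seriesSum_sub]
    have heq : (fun m => ef j m - ef (j + 1) m) = fun m => gg j m - gg j (m + 1) := by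
      funext m
      match m with
      | 0 => exact T1a j
      | (i + 1) => exact T1b j i
    rw [heq, seriesSum_telescope (gg j) (ord_gg j)]
    rfl
  exact sub_eq_zero.mp h

lemma coeff_Ej_of_lt {J N : ℕ} (h : N < J) :
    coeff (R := ℚ) N (seriesSum (ef J)) = coeff (R := ℚ) N 1 := by
  rw [coeff_seriesSum, Finset.sum_range_succ']
  have h0 : coeff (R := ℚ) N (ef J 0) = coeff (R := ℚ) N 1 := by
    unfold ef
    simp only [Nat.zero_mul, pow_zero, one_mul, Nat.zero_add, iPn_zero, mul_one]
    exact coeff_Pi'_of_lt (by omega)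
  have hz : ∀ i ∈ range N, coeff (R := ℚ) N (ef J (i + 1)) = 0 := fun i _ => by
    unfold ef
    apply coeff_X_pow_mul_eq_zero
    have h1 : 1 * (i + 1 + J) ≤ (i + 1) * (i + 1 + J) := Nat.mul_le_mul_right _ (by omega)
    omega
  rw [Finset.sum_eq_zero hz, zero_add, h0]

lemma Ej_eq_one (j : ℕ) : seriesSum (ef j) = 1 := by
  have chain : ∀ t j, seriesSum (ef j) = seriesSum (ef (j + t)) := by
    intro t
    induction t with
    | zero => intro j; rfl
    | succ t ih =>
      intro j
      rw [Ej_step j, ih (j + 1)]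
      exact congrArg (fun a => seriesSum (ef a)) (by omega)
  ext N
  rw [chain (N + 1) j, coeff_Ej_of_lt (by omega)]

lemma Zk_rec (k : ℕ) :
    seriesSum (zf k) = X ^ (k + 1) - (1 + X ^ (k + 1)) * seriesSum (zf (k + 1)) := by
  have h1 : seriesSum (zf k) = seriesSum (fun m => X ^ (k + 1) * ef (k + 2) m
      - (X ^ (k + 1) + 1) * zf (k + 1) m) :=
    congrArg seriesSum (funext fun m => T3 k m)
  rw [h1, seriesSum_sub, seriesSum_mul_left _ _ (ord_ef (k + 2)),
    seriesSum_mul_left _ _ (ord_zf (k + 1)), Ej_eq_one]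
  ring

lemma Wk_rec (k : ℕ) :
    seriesSum (wf k) = X ^ (k + 1) - (1 + X ^ (k + 1)) * seriesSum (wf (k + 1)) := by
  have h1 : seriesSum (wf k) = seriesSum (uf k) - seriesSum (wf (k + 1)) := by
    rw [← seriesSum_sub]
    exact congrArg seriesSum (funext fun m => T4a k m)
  have h2 : seriesSum (uf k) = X ^ (k + 1) - X ^ (k + 1) * seriesSum (wf (k + 1)) := by
    rw [seriesSum_shift (uf k) (ord_uf k), T4c]
    have heq : (fun m => uf k (m + 1)) = fun m => -(X ^ (k + 1) * wf (k + 1) m) :=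
      funext fun m => T4b k m
    rw [heq, seriesSum_neg, seriesSum_mul_left _ _ (ord_wf (k + 1))]
    ring
  rw [h1, h2]
  ring

lemma coeff_Zk_low {k N : ℕ} (h : N ≤ k) : coeff (R := ℚ) N (seriesSum (zf k)) = 0 := by
  rw [coeff_seriesSum]
  refine Finset.sum_eq_zero fun m _ => ?_
  unfold zf
  apply coeff_X_pow_mul_eq_zero
  have h1 : 0 < (m + 1) ^ 2 := by positivity
  have h2 : k * 1 ≤ k * (m + 1) := Nat.mul_le_mul_left _ (by omega)
  omega

lemma coeff_Wk_low {k N : ℕ} (h : N ≤ k) : coeff (R := ℚ) N (seriesSum (wf k)) = 0 := by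
  rw [coeff_seriesSum]
  refine Finset.sum_eq_zero fun m _ => ?_
  unfold wf
  rw [neg_one_pow_coeff, coeff_X_pow_mul_eq_zero, mul_zero]
  have h1 := Tn_ge m
  have h2 : k * 1 ≤ k * (m + 1) := Nat.mul_le_mul_left _ (by omega)
  omega

lemma Zk_eq_Wk : seriesSum (zf 0) = seriesSum (wf 0) := by
  have key : ∀ N k, coeff (R := ℚ) N (seriesSum (zf k) - seriesSum (wf k)) = 0 := by
    intro N
    induction N using Nat.strong_induction_on with
    | _ N ih =>
      have inner : ∀ j k, N ≤ k + j →
          coeff (R := ℚ) N (seriesSum (zf k) - seriesSum (wf k)) = 0 := by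
        intro j
        induction j with
        | zero =>
          intro k hk
          rw [map_sub, coeff_Zk_low (by omega), coeff_Wk_low (by omega), sub_zero]
        | succ j ihj =>
          intro k hk
          rcases le_or_gt N (k + j) with h | h
          · exact ihj k h
          · have hrec : seriesSum (zf k) - seriesSum (wf k)
                = -((seriesSum (zf (k + 1)) - seriesSum (wf (k + 1)))
                    + X ^ (k + 1) * (seriesSum (zf (k + 1)) - seriesSum (wf (k + 1)))) := by
              rw [Zk_rec k, Wk_rec k]
              ring
            rw [hrec, map_neg, map_add]
            have h1 : coeff (R := ℚ) N (seriesSum (zf (k + 1)) - seriesSum (wf (k + 1))) = 0 :=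
              ihj (k + 1) (by omega)
            have h2 : coeff (R := ℚ) N
                (X ^ (k + 1) * (seriesSum (zf (k + 1)) - seriesSum (wf (k + 1)))) = 0 := by
              rw [coeff_X_pow_mul']
              split_ifs with hle
              · exact ih (N - (k + 1)) (by omega) (k + 1)
              · rfl
            rw [h1, h2]
            ring
      exact fun k => inner N k (by omega)
  ext N
  have h := key N 0
  rw [map_sub, sub_eq_zero] at h
  exact h

end Stmt1Aux

/-- Theorem 2.1. -/
theorem stmt1 :
    seriesSum (fun m =>
      (X : PowerSeries ℚ) ^ ((m + 1) ^ 2)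
        * seriesProd (fun k => 1 - X ^ (m + 1 + 1 + k))
        * Ring.inverse (∏ k ∈ Finset.range (m + 1 - 1), (1 - X ^ (k + 1)))
        * Ring.inverse (1 + X ^ (m + 1))) =
    seriesSum (fun m =>
      (-1 : PowerSeries ℚ) ^ (m + 1 - 1) * X ^ ((m + 1) * (m + 1 + 1) / 2)
        * Ring.inverse (∏ j ∈ Finset.range (m + 1), (1 + X ^ (j + 1)))) := by
  have hL : (fun m => (X : PowerSeries ℚ) ^ ((m + 1) ^ 2)
        * seriesProd (fun k => 1 - X ^ (m + 1 + 1 + k))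
        * Ring.inverse (∏ k ∈ Finset.range (m + 1 - 1), (1 - X ^ (k + 1)))
        * Ring.inverse (1 + X ^ (m + 1))) = Stmt1Aux.zf 0 := by
    funext m
    unfold Stmt1Aux.zf Stmt1Aux.Pi' Stmt1Aux.iPn Stmt1Aux.i1p
    rw [show (m + 1) ^ 2 + 0 * (m + 1) = (m + 1) ^ 2 by ring,
      show m + 0 + 2 = m + 1 + 1 by omega, show m + 1 - 1 = m by omega]
    ring
  have hR : (fun m => (-1 : PowerSeries ℚ) ^ (m + 1 - 1) * X ^ ((m + 1) * (m + 1 + 1) / 2)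
        * Ring.inverse (∏ j ∈ Finset.range (m + 1), (1 + X ^ (j + 1)))) = Stmt1Aux.wf 0 := by
    funext m
    unfold Stmt1Aux.wf Stmt1Aux.iQn Stmt1Aux.Tn
    rw [show (m + 1) * (m + 2) / 2 + 0 * (m + 1) = (m + 1) * (m + 1 + 1) / 2 by
      rw [Nat.zero_mul, Nat.add_zero], show m + 1 - 1 = m by omega]
    ring
  rw [hL, hR]
  exact Stmt1Aux.Zk_eq_Wk
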